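/- For 0 < p < 1 and 0 ≤ x ≤ 1, the identity E|1 + √x ξ|^{-p} = Σ_{k=0}^∞ (binom(-p/2, k))² x^k holds, where ξ is uniform on the unit circle in ℂ. -/

import Mathlib

open Real Complex Filter Topology

/-- Generalized binomial coefficient `r choose k`. -/
noncomputable def genBinom (r : ℝ) (k : ℕ) : ℝ :=
  (∏ i ∈ Finset.range k, (r - i)) / (Nat.factorial k)

lemma mem_U_of_ball {z : ℂ} (hz : ‖z‖ < 1) : 0 < (1 + z).re := by
  have h1 : |z.re| ≤ ‖z‖ := Complex.abs_re_le_norm z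
  have h2 : ‖z‖ < 1 := by simpa using hz
  have := (abs_le.mp h1).1
  simp only [Complex.add_re, Complex.one_re]
  linarith

lemma hasDerivAt_one_add_cpow (e : ℂ) {z : ℂ} (hz : 0 < (1 + z).re) :
    HasDerivAt (fun w => (1 + w) ^ e) (e * (1 + z) ^ (e - 1)) z := by
  have h0 : (1 + z) ∈ Complex.slitPlane := Or.inl hz
  have hf : HasDerivAt (fun w : ℂ => 1 + w) 1 z := (hasDerivAt_id z).const_add 1
  simpa using hf.cpow_const h0

lemma isOpen_U : IsOpen {z : ℂ | 0 < (1 + z).re} :=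
  isOpen_lt continuous_const (Complex.continuous_re.comp (by continuity))

lemma iteratedDeriv_one_add_cpow (c : ℂ) :
    ∀ n : ℕ, ∀ z ∈ {z : ℂ | 0 < (1 + z).re},
      iteratedDeriv n (fun w => (1 + w) ^ c) z
        = (∏ i ∈ Finset.range n, (c - i)) * (1 + z) ^ (c - n) := by
  intro n
  induction n with
  | zero => intro z hz; simp
  | succ n ih =>
    intro z hz
    rw [iteratedDeriv_succ]
    have hev : iteratedDeriv n (fun w => (1 + w) ^ c)
        =ᶠ[nhds z] fun w => (∏ i ∈ Finset.range n, (c - i)) * (1 + w) ^ (c - n) := by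
      filter_upwards [isOpen_U.mem_nhds hz] with w hw using ih w hw
    rw [hev.deriv_eq]
    have hd : HasDerivAt (fun w => (∏ i ∈ Finset.range n, (c - i)) * (1 + w) ^ (c - n))
        ((∏ i ∈ Finset.range n, (c - i)) * ((c - n) * (1 + z) ^ (c - n - 1))) z :=
      (hasDerivAt_one_add_cpow (c - n) hz).const_mul _
    rw [hd.deriv, Finset.prod_range_succ]
    push_cast
    rw [← sub_sub]
    ring

/-- Binomial series. -/
lemma hasSum_binomialSeries (r : ℝ) {z : ℂ} (hz : ‖z‖ < 1) :
    HasSum (fun k => (genBinom r k : ℂ) * z ^ k) ((1 + z) ^ (r : ℂ)) := by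
  set f : ℂ → ℂ := fun w => (1 + w) ^ (r : ℂ) with hf
  set R : NNReal := ⟨(1 + ‖z‖)/2, by positivity⟩ with hR
  have hR1 : (R : ℝ) < 1 := by
    show (1 + ‖z‖)/2 < 1
    linarith
  have hzR : ‖z‖ < (R : ℝ) := by
    show ‖z‖ < (1 + ‖z‖)/2
    linarith
  have hdiff : DifferentiableOn ℂ f (Metric.closedBall (0:ℂ) R) := by
    intro w hw
    have hw' : ‖w‖ < 1 := by
      have : ‖w‖ ≤ (R:ℝ) := by simpa [Metric.mem_closedBall, dist_zero_right] using hw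
      linarith
    exact (hasDerivAt_one_add_cpow (r : ℂ) (mem_U_of_ball hw')).differentiableAt.differentiableWithinAt
  have hRpos : (0:NNReal) < R := by
    rw [← NNReal.coe_lt_coe]
    show (0:ℝ) < (1 + ‖z‖)/2
    positivity
  have hps := hdiff.hasFPowerSeriesOnBall hRpos
  have hmem : z ∈ Metric.eball (0:ℂ) ((R:NNReal) : ENNReal) := by
    rw [Metric.emetric_ball_nnreal]
    simpa [Metric.mem_ball, dist_zero_right] using hzR
  have hsum := hps.hasSum_iteratedFDeriv hmem
  rw [zero_add] at hsum
  have key : ∀ n : ℕ, ((Nat.factorial n : ℕ) : ℂ)⁻¹ • iteratedFDeriv ℂ n f 0 (fun _ => z)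
      = (genBinom r n : ℂ) * z ^ n := by
    intro n
    have h1 : iteratedFDeriv ℂ n f 0 (fun _ => z) = z ^ n • iteratedDeriv n f 0 := by
      rw [iteratedDeriv_eq_iteratedFDeriv]
      have : (fun _ : Fin n => z) = fun _ : Fin n => z • (1:ℂ) := by simp
      rw [this, ContinuousMultilinearMap.map_smul_univ]
      simp
    have h2 : iteratedDeriv n f 0 = ∏ i ∈ Finset.range n, ((r : ℂ) - i) := by
      have := iteratedDeriv_one_add_cpow (r : ℂ) n 0 (by norm_num)
      simpa using this
    rw [h1, h2, genBinom]
    push_cast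
    field_simp
    ring
  simpa only [key] using hsum

lemma genBinom_neg_half_eq (p : ℝ) (k : ℕ) :
    genBinom (-p/2) k = (-1)^k * ∏ i ∈ Finset.range k, ((i + p/2)/(i+1)) := by
  rw [genBinom, Finset.prod_div_distrib]
  have h1 : ∏ i ∈ Finset.range k, (-p/2 - (i:ℝ)) = (-1)^k * ∏ i ∈ Finset.range k, ((i:ℝ) + p/2) := by
    have he : ∀ i ∈ Finset.range k, (-p/2 - (i:ℝ)) = (-1) * ((i:ℝ) + p/2) := fun i _ => by ring
    rw [Finset.prod_congr rfl he, Finset.prod_mul_distrib, Finset.prod_const]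
    simp [Finset.card_range]
  have h2 : ((Nat.factorial k : ℕ) : ℝ) = ∏ i ∈ Finset.range k, ((i:ℝ)+1) := by
    rw [← Finset.prod_range_add_one_eq_factorial]
    push_cast; ring
  rw [h1, h2]
  ring

lemma genBinom_abs_le (p : ℝ) (hp0 : 0 < p) (hp1 : p < 1) (k : ℕ) :
    |genBinom (-p/2) k| ≤ ((k:ℝ)+1) ^ (p/2 - 1) := by
  have hfac : ∀ i : ℕ, 0 < ((i:ℝ) + p/2)/((i:ℝ)+1) := by
    intro i
    apply div_pos <;> positivity
  set a : ℝ := ∏ i ∈ Finset.range k, (((i:ℝ) + p/2)/((i:ℝ)+1)) with ha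
  have hapos : 0 < a := Finset.prod_pos fun i _ => hfac i
  have habs : |genBinom (-p/2) k| = a := by
    rw [genBinom_neg_half_eq, abs_mul, _root_.abs_pow, abs_neg, abs_one, one_pow, one_mul,
      abs_of_pos hapos]
  rw [habs]
  -- log a ≤ -(1 - p/2) * Σ 1/(i+1)
  have hlog : Real.log a = ∑ i ∈ Finset.range k, Real.log (((i:ℝ) + p/2)/((i:ℝ)+1)) := by
    rw [ha, Real.log_prod]
    exact fun i _ => (hfac i).ne'
  have hterm : ∀ i : ℕ, Real.log (((i:ℝ) + p/2)/((i:ℝ)+1)) ≤ -(1 - p/2)/((i:ℝ)+1) := by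
    intro i
    have := Real.log_le_sub_one_of_pos (hfac i)
    have h : ((i:ℝ) + p/2)/((i:ℝ)+1) - 1 = -(1 - p/2)/((i:ℝ)+1) := by
      field_simp
      ring
    linarith [h ▸ this]
  have hH : Real.log ((k:ℝ)+1) ≤ ∑ i ∈ Finset.range k, 1/((i:ℝ)+1) := by
    have htel := Finset.sum_range_sub (fun i : ℕ => Real.log ((i:ℝ)+1)) k
    have h0 : Real.log (((0:ℕ):ℝ)+1) = 0 := by norm_num
    rw [h0, sub_zero] at htel
    rw [← htel]
    apply Finset.sum_le_sum
    intro i _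
    have h1 : (0:ℝ) < (i:ℝ)+1 := by positivity
    have hc : ((i+1:ℕ):ℝ) + 1 = (i:ℝ)+2 := by push_cast; ring
    rw [hc]
    have h2 : Real.log ((i:ℝ)+2) - Real.log ((i:ℝ)+1) = Real.log (((i:ℝ)+2)/((i:ℝ)+1)) := by
      rw [Real.log_div (by positivity) h1.ne']
    rw [h2]
    have hlb := Real.log_le_sub_one_of_pos (show (0:ℝ) < ((i:ℝ)+2)/((i:ℝ)+1) by positivity)
    have h3 : ((i:ℝ)+2)/((i:ℝ)+1) - 1 = 1/((i:ℝ)+1) := by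
      rw [div_sub_one h1.ne']
      congr 1
      ring
    linarith [h3 ▸ hlb]
  have hsum : Real.log a ≤ -(1 - p/2) * Real.log ((k:ℝ)+1) := by
    calc Real.log a ≤ ∑ i ∈ Finset.range k, -(1 - p/2)/((i:ℝ)+1) := by
          rw [hlog]; exact Finset.sum_le_sum fun i _ => hterm i
      _ = -(1 - p/2) * ∑ i ∈ Finset.range k, 1/((i:ℝ)+1) := by
          rw [Finset.mul_sum]; congr 1; ext i; ring
      _ ≤ -(1 - p/2) * Real.log ((k:ℝ)+1) := by
          apply mul_le_mul_of_nonpos_left hH (by linarith)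
  calc a = Real.exp (Real.log a) := (Real.exp_log hapos).symm
    _ ≤ Real.exp (-(1 - p/2) * Real.log ((k:ℝ)+1)) := Real.exp_le_exp.mpr hsum
    _ = ((k:ℝ)+1) ^ (p/2 - 1) := by
        rw [Real.rpow_def_of_pos (by positivity)]
        congr 1
        ring

lemma genBinom_abs_le_one (p : ℝ) (hp0 : 0 < p) (hp1 : p < 1) (k : ℕ) :
    |genBinom (-p/2) k| ≤ 1 := by
  refine (genBinom_abs_le p hp0 hp1 k).trans ?_
  calc ((k:ℝ)+1) ^ (p/2 - 1) ≤ ((k:ℝ)+1) ^ (0:ℝ) := by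
        apply Real.rpow_le_rpow_of_exponent_le (by push_cast; linarith [Nat.cast_nonneg (α := ℝ) k]) (by linarith)
    _ = 1 := Real.rpow_zero _

lemma summable_genBinom_sq (p : ℝ) (hp0 : 0 < p) (hp1 : p < 1) :
    Summable (fun k : ℕ => genBinom (-p/2) k ^ 2) := by
  have hle : ∀ k : ℕ, genBinom (-p/2) k ^ 2 ≤ ((k:ℝ)+1) ^ (p - 2) := by
    intro k
    have h1 := genBinom_abs_le p hp0 hp1 k
    have h2 : genBinom (-p/2) k ^ 2 = |genBinom (-p/2) k| ^ 2 := (_root_.sq_abs _).symm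
    rw [h2]
    calc |genBinom (-p/2) k| ^ 2 ≤ (((k:ℝ)+1) ^ (p/2 - 1)) ^ 2 := by
          apply pow_le_pow_left₀ (abs_nonneg _) h1
      _ = ((k:ℝ)+1) ^ (p - 2) := by
          rw [← Real.rpow_natCast (((k:ℝ)+1) ^ (p/2 - 1)) 2, ← Real.rpow_mul (by positivity)]
          norm_num
          ring_nf
  have hs : Summable (fun k : ℕ => ((k:ℝ)+1) ^ (p - 2)) := by
    have := Real.summable_nat_rpow.mpr (show p - 2 < -1 by linarith)
    have h := (summable_nat_add_iff 1).mpr this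
    convert h using 2 with k
    case e'_3 => rfl
    push_cast
    ring_nf
  exact Summable.of_nonneg_of_le (fun k => sq_nonneg _) hle hs

lemma core_lt_one (p x : ℝ) (hp0 : 0 < p) (hp1 : p < 1) (hx0 : 0 ≤ x) (hx1 : x < 1) :
    (∫ t in (0:ℝ)..(2 * Real.pi),
        ‖1 + (Real.sqrt x : ℂ) * Complex.exp (t * Complex.I)‖ ^ (-p))
      = (2 * Real.pi) * ∑' k : ℕ, genBinom (-p / 2) k ^ 2 * x ^ k := by
  have hc2 : -p/2 = -(p/2) := by ring
  set a : ℝ := Real.sqrt x with hadef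
  have ha0 : 0 ≤ a := Real.sqrt_nonneg x
  have ha1 : a < 1 := by
    rw [hadef, Real.sqrt_lt' one_pos]
    simpa using hx1
  set c : ℝ := -p/2 with hcdef
  set A : ℕ × ℕ → ℝ := fun kj => genBinom c kj.1 * genBinom c kj.2 * a^(kj.1+kj.2) with hA
  set term : ℕ × ℕ → ℝ → ℂ :=
    fun kj t => ((A kj : ℝ) : ℂ) * Complex.exp (((kj.1:ℂ) - (kj.2:ℂ)) * (t * I)) with hterm
  set u : ℕ → ℝ := fun k => |genBinom c k| * a^k with hu
  have hu_nonneg : ∀ k, 0 ≤ u k := fun k => mul_nonneg (abs_nonneg _) (pow_nonneg ha0 k)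
  have hu_sum : Summable u := by
    apply Summable.of_nonneg_of_le hu_nonneg (fun k => ?_) (summable_geometric_of_lt_one ha0 ha1)
    calc |genBinom c k| * a^k ≤ 1 * a^k :=
          mul_le_mul_of_nonneg_right (genBinom_abs_le_one p hp0 hp1 k) (pow_nonneg ha0 k)
      _ = a ^ k := one_mul _
  have hA_norm : ∀ kj : ℕ × ℕ, |A kj| = u kj.1 * u kj.2 := by
    intro kj
    simp only [hA, hu, pow_add]
    rw [abs_mul, abs_mul, abs_mul, _root_.abs_pow, _root_.abs_pow, _root_.abs_of_nonneg ha0]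
    ring
  have hA_sum : Summable (fun kj : ℕ × ℕ => |A kj|) := by
    have := hu_sum.mul_of_nonneg hu_sum hu_nonneg hu_nonneg
    exact this.congr fun kj => (hA_norm kj).symm
  -- pointwise representation
  have hptwise : ∀ t : ℝ, HasSum (fun kj : ℕ × ℕ => term kj t)
      ((‖1 + (a:ℂ) * Complex.exp ((t:ℂ) * I)‖ ^ (-p) : ℝ) : ℂ) := by
    intro t
    set z : ℂ := (a:ℂ) * Complex.exp ((t:ℂ) * I) with hz
    have hznorm_eq : ‖z‖ = a := by
      rw [hz, norm_mul, Complex.norm_real, Real.norm_eq_abs,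
        Complex.norm_exp_ofReal_mul_I, _root_.abs_of_nonneg ha0, mul_one]
    have hznorm : ‖z‖ < 1 := by rw [hznorm_eq]; exact ha1
    have h1 := hasSum_binomialSeries c hznorm
    have h2 : HasSum (fun k : ℕ => (starRingEnd ℂ) ((genBinom c k : ℂ) * z ^ k))
        ((starRingEnd ℂ) ((1 + z) ^ (c:ℂ))) :=
      h1.map (starRingEnd ℂ) Complex.continuous_conj
    have hnorm_term : ∀ kj : ℕ × ℕ,
        ‖((genBinom c kj.1 : ℂ) * z ^ kj.1) * (starRingEnd ℂ) ((genBinom c kj.2 : ℂ) * z ^ kj.2)‖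
          = u kj.1 * u kj.2 := by
      intro kj
      rw [norm_mul, RCLike.norm_conj, norm_mul, norm_mul, norm_pow, norm_pow, hznorm_eq]
      simp [hu, Complex.norm_real, Real.norm_eq_abs]
    have hsummable : Summable (fun kj : ℕ × ℕ =>
        ((genBinom c kj.1 : ℂ) * z ^ kj.1) * (starRingEnd ℂ) ((genBinom c kj.2 : ℂ) * z ^ kj.2)) := by
      apply Summable.of_norm
      have := hu_sum.mul_of_nonneg hu_sum hu_nonneg hu_nonneg
      exact this.congr fun kj => (hnorm_term kj).symm
    have h3 := h1.mul h2 hsummable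
    have hval : ((1 + z) ^ (c:ℂ)) * (starRingEnd ℂ) ((1 + z) ^ (c:ℂ))
        = ((‖1 + z‖ ^ (-p) : ℝ) : ℂ) := by
      rw [Complex.mul_conj, Complex.normSq_eq_norm_sq, Complex.norm_cpow_real]
      congr 1
      rw [← Real.rpow_natCast (‖1+z‖ ^ c) 2, ← Real.rpow_mul (norm_nonneg _)]
      congr 1
      rw [hcdef]
      push_cast
      ring
    rw [hval] at h3
    have hconjz : (starRingEnd ℂ) z = (a:ℂ) * Complex.exp (-((t:ℂ) * I)) := by
      rw [hz, map_mul, Complex.conj_ofReal, ← Complex.exp_conj]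
      congr 1
      simp [map_mul, Complex.conj_ofReal, Complex.conj_I]
    have hterm_eq : ∀ kj : ℕ × ℕ,
        ((genBinom c kj.1 : ℂ) * z ^ kj.1) * (starRingEnd ℂ) ((genBinom c kj.2 : ℂ) * z ^ kj.2)
          = term kj t := by
      intro kj
      obtain ⟨k, j⟩ := kj
      have step1 : ((genBinom c k : ℂ) * z ^ k) * (starRingEnd ℂ) ((genBinom c j : ℂ) * z ^ j)
          = ((genBinom c k : ℂ) * (genBinom c j : ℂ) * (a:ℂ)^(k+j))
            * (Complex.exp ((t:ℂ)*I)^k * Complex.exp (-((t:ℂ)*I))^j) := by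
        rw [map_mul, Complex.conj_ofReal, map_pow, hconjz, hz]
        rw [mul_pow, mul_pow, pow_add]
        ring
      rw [step1, hterm, hA]
      simp only
      rw [← Complex.exp_nat_mul, ← Complex.exp_nat_mul, ← Complex.exp_add]
      have harg : ((k:ℂ) * ((t:ℂ)*I) + (j:ℂ) * -((t:ℂ)*I)) = ((k:ℂ) - (j:ℂ)) * ((t:ℂ) * I) := by
        ring
      rw [harg]
      push_cast
      ring
    exact (funext hterm_eq) ▸ h3
  -- per-term integrals
  have hint : ∀ kj : ℕ × ℕ, (∫ t in (0:ℝ)..(2*Real.pi), term kj t)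
      = if kj.1 = kj.2 then ((A kj : ℝ) : ℂ) * (2*Real.pi) else 0 := by
    intro kj
    obtain ⟨k, j⟩ := kj
    by_cases h : k = j
    · subst h
      simp only [hterm, if_pos rfl, sub_self, zero_mul, Complex.exp_zero, mul_one]
      rw [intervalIntegral.integral_const]
      push_cast
      ring_nf
      rw [Complex.real_smul]
      push_cast
      ring
    · simp only [hterm, if_neg h]
      have hm : ((k:ℂ) - (j:ℂ)) ≠ 0 := by
        intro hEq
        exact h (by exact_mod_cast sub_eq_zero.mp hEq)
      have hc' : ((k:ℂ) - (j:ℂ)) * I ≠ 0 := mul_ne_zero hm Complex.I_ne_zero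
      rw [intervalIntegral.integral_const_mul]
      have harg : ∀ t : ℝ, ((k:ℂ) - (j:ℂ)) * ((t:ℂ) * I) = (((k:ℂ) - (j:ℂ)) * I) * (t:ℂ) := by
        intro t; ring
      simp_rw [harg]
      rw [integral_exp_mul_complex hc']
      have h2pi : (((k:ℂ) - (j:ℂ)) * I) * ((2*Real.pi : ℝ):ℂ) = ((k - j : ℤ) : ℂ) * (2 * Real.pi * I) := by
        push_cast
        ring
      rw [h2pi, Complex.exp_int_mul_two_pi_mul_I]
      simp

  -- Step C: swap integral and sum
  have h2pile : (0:ℝ) ≤ 2 * Real.pi := by positivity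
  have hcont : ∀ kj : ℕ × ℕ, Continuous (term kj) := by
    intro kj
    rw [hterm]
    apply Continuous.mul continuous_const
    apply Complex.continuous_exp.comp
    apply Continuous.mul continuous_const
    exact (Complex.continuous_ofReal).mul continuous_const
  have hnr : ∀ (kj : ℕ × ℕ) (t : ℝ), ‖term kj t‖ = |A kj| := by
    intro kj t
    rw [hterm]
    simp only
    rw [norm_mul, Complex.norm_real, Real.norm_eq_abs]
    have harg2 : ((kj.1:ℂ) - (kj.2:ℂ)) * ((t:ℂ) * I) = ((((kj.1:ℝ) - kj.2) * t : ℝ) : ℂ) * I := by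
      push_cast
      ring
    rw [harg2, Complex.norm_exp_ofReal_mul_I, mul_one]
  have hswap : (∫ t in (0:ℝ)..(2*Real.pi), ((‖1 + (a:ℂ) * Complex.exp ((t:ℂ) * I)‖ ^ (-p) : ℝ) : ℂ))
      = ∑' kj : ℕ × ℕ, ∫ t in (0:ℝ)..(2*Real.pi), term kj t := by
    have hrepr : ∀ t : ℝ, ((‖1 + (a:ℂ)*Complex.exp ((t:ℂ)*I)‖ ^ (-p) : ℝ) : ℂ)
        = ∑' kj : ℕ × ℕ, term kj t := fun t => ((hptwise t).tsum_eq).symm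
    rw [intervalIntegral.integral_congr (g := fun t => ∑' kj : ℕ × ℕ, term kj t)
      (fun t _ => hrepr t)]
    rw [intervalIntegral.integral_of_le h2pile]
    rw [MeasureTheory.integral_tsum (fun kj => (hcont kj).aestronglyMeasurable) ?_]
    · congr 1
      funext kj
      rw [← intervalIntegral.integral_of_le h2pile]
    · have hlint : ∀ kj : ℕ × ℕ, (∫⁻ t in Set.Ioc (0:ℝ) (2*Real.pi), ‖term kj t‖₊ ∂MeasureTheory.volume)
          = (‖A kj‖₊ : ENNReal) * ENNReal.ofReal (2*Real.pi) := by
        intro kj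
        have hptnn : ∀ t : ℝ, (‖term kj t‖₊ : ENNReal) = (‖A kj‖₊ : ENNReal) := by
          intro t
          congr 1
          apply NNReal.coe_injective
          rw [coe_nnnorm, coe_nnnorm, hnr kj t, Real.norm_eq_abs]
        simp_rw [hptnn]
        rw [MeasureTheory.lintegral_const, MeasureTheory.Measure.restrict_apply MeasurableSet.univ,
          Set.univ_inter, Real.volume_Ioc]
        congr 1
        rw [sub_zero]
      simp_rw [enorm_eq_nnnorm]
      simp_rw [hlint]
      rw [ENNReal.tsum_mul_right]
      apply ENNReal.mul_ne_top
      · rw [ENNReal.tsum_coe_ne_top_iff_summable]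
        rw [← NNReal.summable_coe]
        apply hA_sum.congr
        intro kj
        rw [coe_nnnorm, Real.norm_eq_abs]
      · exact ENNReal.ofReal_ne_top
  -- Step D: diagonal
  have hsum_real : Summable (fun k : ℕ => genBinom c k ^ 2 * x ^ k) := by
    apply Summable.of_nonneg_of_le (fun k => mul_nonneg (sq_nonneg _) (pow_nonneg hx0 k))
      (fun k => ?_) (summable_genBinom_sq p hp0 hp1)
    calc genBinom c k ^ 2 * x ^ k ≤ genBinom c k ^ 2 * 1 :=
          mul_le_mul_of_nonneg_left (pow_le_one₀ hx0 hx1.le) (sq_nonneg _)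
      _ = genBinom c k ^ 2 := mul_one _
  have hAkk : ∀ k : ℕ, A (k, k) = genBinom c k ^ 2 * x ^ k := by
    intro k
    rw [hA]
    simp only
    rw [← two_mul, pow_mul, Real.sq_sqrt hx0]
    ring
  have hdiag : (∑' kj : ℕ × ℕ, if kj.1 = kj.2 then ((A kj : ℝ) : ℂ) * (2*Real.pi) else 0)
      = ∑' k : ℕ, ((A (k, k) : ℝ) : ℂ) * (2*Real.pi) := by
    apply tsum_eq_tsum_of_ne_zero_bij (fun k => ((k : ℕ), (k : ℕ)))
    · intro k1 k2 hk
      have := congrArg Prod.fst hk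
      exact Subtype.ext this
    · intro kj hkj
      simp only [Function.mem_support, ne_eq] at hkj
      obtain ⟨k, j⟩ := kj
      by_cases hd : k = j
      · subst hd
        refine ⟨⟨k, ?_⟩, rfl⟩
        simp only [Function.mem_support, ne_eq]
        intro h0
        apply hkj
        simpa using h0
      · exact (hkj (if_neg hd)).elim
    · intro k
      simp
  have hfinal : (∑' k : ℕ, ((A (k, k) : ℝ) : ℂ) * (2*Real.pi))
      = (((2 * Real.pi) * ∑' k : ℕ, genBinom c k ^ 2 * x ^ k : ℝ) : ℂ) := by
    have h1 := (hsum_real.hasSum.mul_right (2*Real.pi)).map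
      (Complex.ofRealHom) Complex.continuous_ofReal
    have h2 : (∑' k : ℕ, ((genBinom c k ^ 2 * x ^ k * (2*Real.pi) : ℝ) : ℂ))
        = (((∑' k : ℕ, genBinom c k ^ 2 * x ^ k) * (2*Real.pi) : ℝ) : ℂ) := h1.tsum_eq
    calc (∑' k : ℕ, ((A (k, k) : ℝ) : ℂ) * (2*Real.pi))
        = ∑' k : ℕ, ((genBinom c k ^ 2 * x ^ k * (2*Real.pi) : ℝ) : ℂ) := by
          congr 1
          funext k
          rw [hAkk k]
          push_cast
          ring
      _ = (((∑' k : ℕ, genBinom c k ^ 2 * x ^ k) * (2*Real.pi) : ℝ) : ℂ) := h2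
      _ = _ := by
          push_cast
          ring
  -- conclude
  have hC : ((∫ t in (0:ℝ)..(2*Real.pi), ‖1 + (a:ℂ) * Complex.exp ((t:ℂ) * I)‖ ^ (-p) : ℝ) : ℂ)
      = (((2 * Real.pi) * ∑' k : ℕ, genBinom c k ^ 2 * x ^ k : ℝ) : ℂ) := by
    rw [← intervalIntegral.integral_ofReal]
    rw [hswap]
    simp_rw [hint]
    rw [hdiag, hfinal]
  exact_mod_cast hC

lemma abs_sq_expand (b t : ℝ) :
    ‖1 + (b:ℂ) * Complex.exp ((t:ℂ) * I)‖ ^ 2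
      = (b + Real.cos t)^2 + Real.sin t ^ 2 := by
  rw [Complex.sq_norm, Complex.normSq_apply]
  simp only [Complex.add_re, Complex.add_im, Complex.one_re, Complex.one_im, Complex.mul_re,
    Complex.mul_im, Complex.ofReal_re, Complex.ofReal_im, Complex.exp_ofReal_mul_I_re,
    Complex.exp_ofReal_mul_I_im, zero_mul, sub_zero, zero_add, mul_zero, add_zero]
  have hsc := Real.sin_sq_add_cos_sq t
  linear_combination (b^2 - 1) * hsc

lemma abs_ge_sin (b t : ℝ) :
    |Real.sin t| ≤ ‖1 + (b:ℂ) * Complex.exp ((t:ℂ) * I)‖ := by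
  have h1 : Real.sin t ^ 2 ≤ ‖1 + (b:ℂ) * Complex.exp ((t:ℂ) * I)‖ ^ 2 := by
    rw [abs_sq_expand]
    nlinarith [sq_nonneg (b + Real.cos t)]
  calc |Real.sin t| = Real.sqrt (Real.sin t ^ 2) := (Real.sqrt_sq_eq_abs _).symm
    _ ≤ Real.sqrt (‖1 + (b:ℂ) * Complex.exp ((t:ℂ) * I)‖ ^ 2) :=
        Real.sqrt_le_sqrt h1
    _ = _ := Real.sqrt_sq (norm_nonneg _)

lemma abs_ge_one_of_cos_nonneg (b t : ℝ) (hb : 0 ≤ b) (hc : 0 ≤ Real.cos t) :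
    1 ≤ ‖1 + (b:ℂ) * Complex.exp ((t:ℂ) * I)‖ := by
  have h1 := abs_sq_expand b t
  have h2 := Real.sin_sq_add_cos_sq t
  have h3 := norm_nonneg (1 + (b:ℂ) * Complex.exp ((t:ℂ) * I))
  nlinarith [h1, h2, h3, sq_nonneg b]

lemma abs_near_pi (t : ℝ) (ht : t ∈ Set.Icc 0 (2*Real.pi)) (hc : Real.cos t < 0) :
    |t - Real.pi| ≤ Real.pi/2 ∧
    2/Real.pi * |t - Real.pi| ≤ |Real.sin t| := by
  have hpi := Real.pi_pos
  have hmem : |t - Real.pi| ≤ Real.pi/2 := by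
    rw [abs_le]
    constructor
    · by_contra h
      push_neg at h
      have : 0 ≤ Real.cos t :=
        Real.cos_nonneg_of_mem_Icc ⟨by linarith [ht.1], by linarith⟩
      linarith
    · by_contra h
      push_neg at h
      have h2 : 0 ≤ Real.cos (t - 2*Real.pi) :=
        Real.cos_nonneg_of_mem_Icc ⟨by linarith, by linarith [ht.2]⟩
      rw [Real.cos_sub_two_pi] at h2
      linarith
  refine ⟨hmem, ?_⟩
  have h3 : Real.sin ((t - Real.pi) + Real.pi) = -Real.sin (t - Real.pi) := Real.sin_add_pi _
  rw [show t - Real.pi + Real.pi = t by ring] at h3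
  calc 2/Real.pi * |t - Real.pi| ≤ |Real.sin (t - Real.pi)| := Real.mul_abs_le_abs_sin hmem
    _ = |Real.sin t| := by rw [h3, abs_neg]

lemma main_bound (p b t : ℝ) (hp0 : 0 < p) (hb0 : 0 ≤ b) (hb1 : b ≤ 1)
    (ht : t ∈ Set.Icc 0 (2*Real.pi)) (htne : t ≠ Real.pi) :
    ‖1 + (b:ℂ) * Complex.exp ((t:ℂ) * I)‖ ^ (-p)
      ≤ 1 + (Real.pi/2)^p * |t - Real.pi| ^ (-p) := by
  have hpi := Real.pi_pos
  by_cases hc : 0 ≤ Real.cos t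
  · have h1 := abs_ge_one_of_cos_nonneg b t hb0 hc
    have h2 : ‖1 + (b:ℂ) * Complex.exp ((t:ℂ) * I)‖ ^ (-p) ≤ 1 :=
      Real.rpow_le_one_of_one_le_of_nonpos h1 (by linarith)
    have h3 : 0 ≤ (Real.pi/2)^p * |t - Real.pi| ^ (-p) := by positivity
    linarith
  · push_neg at hc
    obtain ⟨hmem, hsin⟩ := abs_near_pi t ht hc
    have htpos : 0 < |t - Real.pi| := abs_pos.mpr (sub_ne_zero.mpr htne)
    have hpos : 0 < 2/Real.pi * |t - Real.pi| := mul_pos (by positivity) htpos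
    have hle : 2/Real.pi * |t - Real.pi| ≤ ‖1 + (b:ℂ) * Complex.exp ((t:ℂ) * I)‖ :=
      le_trans hsin (abs_ge_sin b t)
    have h4 : ‖1 + (b:ℂ) * Complex.exp ((t:ℂ) * I)‖ ^ (-p)
        ≤ (2/Real.pi * |t - Real.pi|) ^ (-p) :=
      Real.rpow_le_rpow_of_nonpos hpos hle (by linarith)
    have h5 : (2/Real.pi * |t - Real.pi|) ^ (-p) = (Real.pi/2)^p * |t - Real.pi| ^ (-p) := by
      rw [Real.mul_rpow (by positivity) (abs_nonneg _)]
      congr 1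
      rw [show (2/Real.pi) = (Real.pi/2)⁻¹ by rw [inv_div],
        Real.inv_rpow (by positivity), ← Real.rpow_neg (by positivity), neg_neg]
    have h6 : 0 ≤ (Real.pi/2)^p * |t - Real.pi| ^ (-p) := by positivity
    linarith [h5 ▸ h4]

lemma abs_pos_of_ne_pi (b t : ℝ) (hb0 : 0 ≤ b) (hb1 : b ≤ 1)
    (ht : t ∈ Set.Icc 0 (2*Real.pi)) (htne : t ≠ Real.pi) :
    0 < ‖1 + (b:ℂ) * Complex.exp ((t:ℂ) * I)‖ := by
  by_cases hc : 0 ≤ Real.cos t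
  · linarith [abs_ge_one_of_cos_nonneg b t hb0 hc]
  · push_neg at hc
    obtain ⟨hmem, hsin⟩ := abs_near_pi t ht hc
    have htpos : 0 < |t - Real.pi| := abs_pos.mpr (sub_ne_zero.mpr htne)
    have hpos : 0 < 2/Real.pi * |t - Real.pi| := mul_pos (by positivity) htpos
    calc (0:ℝ) < 2/Real.pi * |t - Real.pi| := hpos
      _ ≤ |Real.sin t| := hsin
      _ ≤ _ := abs_ge_sin b t

/-- The expectation `E|1 + √x ξ|^{-p}` for `ξ` uniform on the unit circle,
written as `(1/2π) ∫_0^{2π} |1 + √x e^{it}|^{-p} dt`. -/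
theorem stmt8 (p x : ℝ) (hp0 : 0 < p) (hp1 : p < 1) (hx0 : 0 ≤ x) (hx1 : x ≤ 1) :
    (1 / (2 * Real.pi)) *
        ∫ t in (0:ℝ)..(2 * Real.pi),
          ‖1 + (Real.sqrt x : ℂ) * Complex.exp (t * Complex.I)‖ ^ (-p)
      = ∑' k : ℕ, genBinom (-p / 2) k ^ 2 * x ^ k := by
  have hpi := Real.pi_pos
  rcases lt_or_eq_of_le hx1 with hlt | heq
  · rw [core_lt_one p x hp0 hp1 hx0 hlt]
    field_simp
  · subst heq
    -- approximating sequence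
    set xs : ℕ → ℝ := fun n => 1 - 1/((n:ℝ)+2) with hxs
    have hxs0 : ∀ n : ℕ, 0 ≤ xs n := by
      intro n
      have hn : (0:ℝ) ≤ (n:ℝ) := Nat.cast_nonneg n
      have h1 : 1/((n:ℝ)+2) ≤ 1 := by
        rw [div_le_one (by positivity)]
        linarith
      simp only [hxs]
      linarith
    have hxs1 : ∀ n : ℕ, xs n < 1 := by
      intro n
      have : 0 < 1/((n:ℝ)+2) := by positivity
      simp only [hxs]
      linarith
    have hxs_tendsto : Tendsto xs atTop (𝓝 1) := by
      have h1 : Tendsto (fun n : ℕ => ((n:ℝ)+2)) atTop atTop :=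
        tendsto_atTop_add_const_right _ 2 tendsto_natCast_atTop_atTop
      have h0 : Tendsto (fun n : ℕ => ((n:ℝ)+2)⁻¹) atTop (𝓝 0) := h1.inv_tendsto_atTop
      have h2 : Tendsto (fun n : ℕ => 1 - ((n:ℝ)+2)⁻¹) atTop (𝓝 (1 - 0)) :=
        tendsto_const_nhds.sub h0
      simpa [hxs, one_div] using h2
    have hb_tendsto : Tendsto (fun n => Real.sqrt (xs n)) atTop (𝓝 (Real.sqrt 1)) :=
      (Real.continuous_sqrt.tendsto 1).comp hxs_tendsto
    set F : ℕ → ℝ → ℝ :=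
      fun n t => ‖1 + (Real.sqrt (xs n) : ℂ) * Complex.exp ((t:ℂ) * I)‖ ^ (-p) with hF
    set fl : ℝ → ℝ :=
      fun t => ‖1 + (Real.sqrt 1 : ℂ) * Complex.exp ((t:ℂ) * I)‖ ^ (-p) with hfl
    have hb0 : ∀ n, 0 ≤ Real.sqrt (xs n) := fun n => Real.sqrt_nonneg _
    have hb1' : ∀ n, Real.sqrt (xs n) ≤ 1 := fun n => Real.sqrt_le_one.mpr (hxs1 n).le
    have habs_lb : ∀ (b t : ℝ), 0 ≤ b →
        1 - b ≤ ‖1 + (b:ℂ) * Complex.exp ((t:ℂ)*I)‖ := by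
      intro b t hb
      have h3 := norm_sub_norm_le (1:ℂ) (-((b:ℂ) * Complex.exp ((t:ℂ)*I)))
      rw [sub_neg_eq_add, norm_neg, norm_one, norm_mul, Complex.norm_real, Real.norm_eq_abs,
        _root_.abs_of_nonneg hb, Complex.norm_exp_ofReal_mul_I, mul_one] at h3
      simpa using h3
    have hFcont : ∀ n, Continuous (F n) := by
      intro n
      rw [hF]
      apply Continuous.rpow_const
      · exact continuous_norm.comp (by continuity)
      · intro t
        left
        have hlt1 : Real.sqrt (xs n) < 1 := by
          rw [Real.sqrt_lt' one_pos]
          simpa using hxs1 n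
        have h2 := habs_lb (Real.sqrt (xs n)) t (hb0 n)
        have : (0:ℝ) < 1 - Real.sqrt (xs n) := by linarith
        exact (lt_of_lt_of_le this h2).ne'
    have hFnn : ∀ n t, 0 ≤ F n t := fun n t => Real.rpow_nonneg (norm_nonneg _) _
    have hflnn : ∀ t, 0 ≤ fl t := fun t => Real.rpow_nonneg (norm_nonneg _) _
    have hpi_ae : ∀ᵐ t : ℝ ∂MeasureTheory.volume, t ≠ Real.pi := by
      have hset : {a : ℝ | ¬ a ≠ Real.pi} = {Real.pi} := by ext t; simp
      rw [MeasureTheory.ae_iff, hset]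
      exact Real.volume_singleton
    -- shared convergence / bounds
    have hconv : ∀ t ∈ Set.Icc (0:ℝ) (2*Real.pi), t ≠ Real.pi →
        Tendsto (fun n => F n t) atTop (𝓝 (fl t)) := by
      intro t hic htne
      have hcont2 : Continuous (fun b : ℝ => ‖1 + (b:ℂ) * Complex.exp ((t:ℂ)*I)‖) :=
        continuous_norm.comp (by continuity)
      have hbase : Tendsto (fun n => ‖1 + (Real.sqrt (xs n):ℂ) * Complex.exp ((t:ℂ)*I)‖)
          atTop (𝓝 (‖1 + (Real.sqrt 1:ℂ) * Complex.exp ((t:ℂ)*I)‖)) :=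
        (hcont2.tendsto _).comp hb_tendsto
      have hne : ‖1 + (Real.sqrt 1:ℂ) * Complex.exp ((t:ℂ)*I)‖ ≠ 0 :=
        (abs_pos_of_ne_pi (Real.sqrt 1) t (Real.sqrt_nonneg 1)
          (by rw [Real.sqrt_one]) hic htne).ne'
      have hrc : ContinuousAt (fun y : ℝ => y ^ (-p))
          (‖1 + (Real.sqrt 1:ℂ) * Complex.exp ((t:ℂ)*I)‖) :=
        Real.continuousAt_rpow_const _ _ (Or.inl hne)
      exact (hrc.tendsto.comp hbase : _)
    have hbnd : ∀ (b : ℝ), 0 ≤ b → b ≤ 1 → ∀ t ∈ Set.Icc (0:ℝ) (2*Real.pi), t ≠ Real.pi →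
        ‖1 + (b:ℂ) * Complex.exp ((t:ℂ) * I)‖ ^ (-p)
          ≤ 1 + (Real.pi/2)^p * |t - Real.pi| ^ (-p) :=
      fun b h0 h1 t ht htne => main_bound p b t hp0 h0 h1 ht htne
    -- bounds on the two subintervals
    have hbi_base : IntervalIntegrable (fun s : ℝ => s ^ (-p)) MeasureTheory.volume 0 Real.pi :=
      intervalIntegral.intervalIntegrable_rpow' (by linarith)
    have hbi2 : IntervalIntegrable (fun t : ℝ => 1 + (Real.pi/2)^p * (t - Real.pi) ^ (-p))
        MeasureTheory.volume Real.pi (2*Real.pi) := by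
      apply IntervalIntegrable.add intervalIntegrable_const
      apply IntervalIntegrable.const_mul
      have h := hbi_base.comp_sub_right Real.pi
      rw [zero_add] at h
      have h2 : Real.pi + Real.pi = 2*Real.pi := by ring
      rwa [h2] at h
    have hbi1 : IntervalIntegrable (fun t : ℝ => 1 + (Real.pi/2)^p * (Real.pi - t) ^ (-p))
        MeasureTheory.volume 0 Real.pi := by
      apply IntervalIntegrable.add intervalIntegrable_const
      apply IntervalIntegrable.const_mul
      have h := hbi_base.symm.comp_sub_left Real.pi
      rw [sub_self, sub_zero] at h
      exact h
    have huIoc1 : Set.uIoc (0:ℝ) Real.pi = Set.Ioc 0 Real.pi := Set.uIoc_of_le hpi.le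
    have huIoc2 : Set.uIoc Real.pi (2*Real.pi) = Set.Ioc Real.pi (2*Real.pi) :=
      Set.uIoc_of_le (by linarith)
    have hicc1 : ∀ t, t ∈ Set.Ioc (0:ℝ) Real.pi → t ∈ Set.Icc (0:ℝ) (2*Real.pi) :=
      fun t h => ⟨h.1.le, by linarith [h.2]⟩
    have hicc2 : ∀ t, t ∈ Set.Ioc Real.pi (2*Real.pi) → t ∈ Set.Icc (0:ℝ) (2*Real.pi) :=
      fun t h => ⟨by linarith [h.1], h.2⟩
    -- DCT on [0, π]
    have hdct1 : Tendsto (fun n => ∫ t in (0:ℝ)..Real.pi, F n t) atTop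
        (𝓝 (∫ t in (0:ℝ)..Real.pi, fl t)) := by
      apply intervalIntegral.tendsto_integral_filter_of_dominated_convergence
        (bound := fun t => 1 + (Real.pi/2)^p * (Real.pi - t) ^ (-p))
      · filter_upwards with n
        exact (hFcont n).aestronglyMeasurable
      · filter_upwards with n
        filter_upwards [hpi_ae] with t htne hmem
        rw [huIoc1] at hmem
        rw [Real.norm_eq_abs, _root_.abs_of_nonneg (hFnn n t)]
        have hb := hbnd (Real.sqrt (xs n)) (hb0 n) (hb1' n) t (hicc1 t hmem) htne
        have habs : |t - Real.pi| = Real.pi - t := by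
          rw [abs_of_nonpos (by linarith [hmem.2])]; ring
        rw [habs] at hb
        exact hb
      · exact hbi1
      · filter_upwards [hpi_ae] with t htne hmem
        rw [huIoc1] at hmem
        exact hconv t (hicc1 t hmem) htne
    -- DCT on [π, 2π]
    have hdct2 : Tendsto (fun n => ∫ t in Real.pi..(2*Real.pi), F n t) atTop
        (𝓝 (∫ t in Real.pi..(2*Real.pi), fl t)) := by
      apply intervalIntegral.tendsto_integral_filter_of_dominated_convergence
        (bound := fun t => 1 + (Real.pi/2)^p * (t - Real.pi) ^ (-p))
      · filter_upwards with n
        exact (hFcont n).aestronglyMeasurable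
      · filter_upwards with n
        filter_upwards [hpi_ae] with t htne hmem
        rw [huIoc2] at hmem
        rw [Real.norm_eq_abs, _root_.abs_of_nonneg (hFnn n t)]
        have hb := hbnd (Real.sqrt (xs n)) (hb0 n) (hb1' n) t (hicc2 t hmem) htne
        have habs : |t - Real.pi| = t - Real.pi := by
          rw [_root_.abs_of_nonneg (by linarith [hmem.1])]
        rw [habs] at hb
        exact hb
      · exact hbi2
      · filter_upwards [hpi_ae] with t htne hmem
        rw [huIoc2] at hmem
        exact hconv t (hicc2 t hmem) htne
    -- integrability of the limit function on both pieces
    have hfl_meas : ∀ (a b : ℝ), (Set.uIoc a b ⊆ Set.Icc (0:ℝ) (2*Real.pi)) →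
        MeasureTheory.AEStronglyMeasurable fl (MeasureTheory.volume.restrict (Set.uIoc a b)) := by
      intro a b hsub
      apply aestronglyMeasurable_of_tendsto_ae atTop
        (fun n => (hFcont n).aestronglyMeasurable)
      filter_upwards [MeasureTheory.ae_restrict_of_ae hpi_ae,
        MeasureTheory.ae_restrict_mem measurableSet_uIoc] with t htne hmem
      exact hconv t (hsub hmem) htne
    have hfl_int1 : IntervalIntegrable fl MeasureTheory.volume 0 Real.pi := by
      rw [intervalIntegrable_iff]
      apply MeasureTheory.Integrable.mono'
        (g := fun t => 1 + (Real.pi/2)^p * (Real.pi - t) ^ (-p))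
        (intervalIntegrable_iff.mp hbi1)
        (hfl_meas 0 Real.pi (fun t ht => hicc1 t (huIoc1 ▸ ht)))
      filter_upwards [MeasureTheory.ae_restrict_of_ae hpi_ae,
        MeasureTheory.ae_restrict_mem measurableSet_uIoc] with t htne hmem
      rw [Real.norm_eq_abs, _root_.abs_of_nonneg (hflnn t)]
      rw [huIoc1] at hmem
      have hb := hbnd (Real.sqrt 1) (Real.sqrt_nonneg 1) (by rw [Real.sqrt_one]) t
        (hicc1 t hmem) htne
      have habs : |t - Real.pi| = Real.pi - t := by
        rw [abs_of_nonpos (by linarith [hmem.2])]; ring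
      rwa [habs] at hb
    have hfl_int2 : IntervalIntegrable fl MeasureTheory.volume Real.pi (2*Real.pi) := by
      rw [intervalIntegrable_iff]
      apply MeasureTheory.Integrable.mono'
        (g := fun t => 1 + (Real.pi/2)^p * (t - Real.pi) ^ (-p))
        (intervalIntegrable_iff.mp hbi2)
        (hfl_meas Real.pi (2*Real.pi) (fun t ht => hicc2 t (huIoc2 ▸ ht)))
      filter_upwards [MeasureTheory.ae_restrict_of_ae hpi_ae,
        MeasureTheory.ae_restrict_mem measurableSet_uIoc] with t htne hmem
      rw [Real.norm_eq_abs, _root_.abs_of_nonneg (hflnn t)]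
      rw [huIoc2] at hmem
      have hb := hbnd (Real.sqrt 1) (Real.sqrt_nonneg 1) (by rw [Real.sqrt_one]) t
        (hicc2 t hmem) htne
      have habs : |t - Real.pi| = t - Real.pi := by
        rw [_root_.abs_of_nonneg (by linarith [hmem.1])]
      rwa [habs] at hb
    -- splitting and limits
    have hsplit : ∀ n, (∫ t in (0:ℝ)..(2*Real.pi), F n t)
        = (∫ t in (0:ℝ)..Real.pi, F n t) + ∫ t in Real.pi..(2*Real.pi), F n t := fun n =>
      (intervalIntegral.integral_add_adjacent_intervals
        ((hFcont n).intervalIntegrable _ _) ((hFcont n).intervalIntegrable _ _)).symm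
    have hsplitl : (∫ t in (0:ℝ)..(2*Real.pi), fl t)
        = (∫ t in (0:ℝ)..Real.pi, fl t) + ∫ t in Real.pi..(2*Real.pi), fl t :=
      (intervalIntegral.integral_add_adjacent_intervals hfl_int1 hfl_int2).symm
    have hlhs : Tendsto (fun n => ∫ t in (0:ℝ)..(2*Real.pi), F n t) atTop
        (𝓝 (∫ t in (0:ℝ)..(2*Real.pi), fl t)) := by
      rw [hsplitl, funext hsplit]
      exact hdct1.add hdct2
    have hrhs : Tendsto (fun n => ∑' k : ℕ, genBinom (-p/2) k ^ 2 * (xs n) ^ k) atTop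
        (𝓝 (∑' k : ℕ, genBinom (-p/2) k ^ 2 * (1:ℝ)^k)) := by
      apply tendsto_tsum_of_dominated_convergence (bound := fun k => genBinom (-p/2) k ^ 2)
        (summable_genBinom_sq p hp0 hp1)
      · intro k
        exact tendsto_const_nhds.mul (hxs_tendsto.pow k)
      · filter_upwards with n k
        rw [Real.norm_eq_abs, abs_mul, _root_.abs_of_nonneg (sq_nonneg _), _root_.abs_pow,
          _root_.abs_of_nonneg (hxs0 n)]
        calc genBinom (-p/2) k ^ 2 * (xs n) ^ k ≤ genBinom (-p/2) k ^ 2 * 1 :=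
              mul_le_mul_of_nonneg_left (pow_le_one₀ (hxs0 n) (hxs1 n).le) (sq_nonneg _)
          _ = genBinom (-p/2) k ^ 2 := mul_one _
    have heqn : ∀ n, (1/(2*Real.pi)) * (∫ t in (0:ℝ)..(2*Real.pi), F n t)
        = ∑' k : ℕ, genBinom (-p/2) k ^ 2 * (xs n) ^ k := by
      intro n
      rw [hF]
      simp only
      rw [core_lt_one p (xs n) hp0 hp1 (hxs0 n) (hxs1 n)]
      field_simp
    have h1 : Tendsto (fun n => (1/(2*Real.pi)) * ∫ t in (0:ℝ)..(2*Real.pi), F n t) atTop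
        (𝓝 ((1/(2*Real.pi)) * ∫ t in (0:ℝ)..(2*Real.pi), fl t)) := tendsto_const_nhds.mul hlhs
    have h2 : Tendsto (fun n => (1/(2*Real.pi)) * ∫ t in (0:ℝ)..(2*Real.pi), F n t) atTop
        (𝓝 (∑' k : ℕ, genBinom (-p/2) k ^ 2 * (1:ℝ)^k)) := by
      rw [funext heqn]
      exact hrhs
    have := tendsto_nhds_unique h1 h2
    convert this using 2
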